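/- The global function f_Y of the sand automaton Y is F-injective and P-injective: any two distinct finite configurations have distinct images under f_Y, and any two distinct periodic configurations have distinct images under f_Y. -/

import Mathlib

/-- The extended integers `ℤ ∪ {-∞, +∞}`. -/
abbrev EZ : Type := WithBot (WithTop ℤ)

/-- Embedding of `ℤ` into the extended integers. -/
def finVal (n : ℤ) : EZ := ((n : WithTop ℤ) : EZ)

/-- The integer value of a finite extended integer (`0` on `±∞`). -/
def valZ (x : EZ) : ℤ := WithBot.recBotCoe 0 (fun y => WithTop.recTopCoe 0 id y) x

/-- The measuring device `β_l^m`. -/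
noncomputable def beta (l : ℕ) (m : ℤ) (n : EZ) : EZ :=
  if finVal (m + (l : ℤ)) < n then ⊤
  else if n < finVal (m - (l : ℤ)) then ⊥
  else WithBot.map (WithTop.map (fun k => k - m)) n

/-- Reference height: the value of `x` if finite, `0` if `x = ±∞`. -/
def refH (x : EZ) : ℤ := if x = ⊥ ∨ x = ⊤ then 0 else valZ x

/-- One-dimensional sandpile configurations. -/
abbrev Config : Type := ℤ → EZ

/-- The neighborhood sequence `d_r^i(c)`: the `2r`-tuple of measured differences. -/
noncomputable def nbhd (r : ℕ) (c : Config) (i : ℤ) : Fin (2 * r) → EZ :=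
  fun j => beta r (refH (c i))
    (c (i + (if (j : ℕ) < r then ((j : ℕ) : ℤ) - (r : ℤ) else ((j : ℕ) : ℤ) - (r : ℤ) + 1)))

/-- The global function of the sand automaton of radius `r` with local rule `lam`. -/
noncomputable def globalF (r : ℕ) (lam : (Fin (2 * r) → EZ) → ℤ) (c : Config) : Config :=
  fun i => if c i = ⊥ ∨ c i = ⊤ then c i
    else finVal (valZ (c i) + lam (nbhd r c i))

/-- Finite configurations. -/
def FiniteConf (c : Config) : Prop := ∃ k : ℕ, ∀ i : ℤ, (k : ℤ) ≤ |i| → c i = finVal 0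

/-- Periodic configurations. -/
def PeriodicConf (c : Config) : Prop := ∃ p : ℤ, p ≠ 0 ∧ ∀ i : ℤ, c (i + p) = c i


/-- The local rule of the sand automaton `Y` (radius 2, arguments `(a,b,x,y)`):
returns `-1` on `(+∞,-,-,-)`, `(2,-,-,-)`, `(1,-,-,-)`, `(0,-,-,-)`, `(-1,-∞,-,-)`,
and `0` otherwise. -/
def lamY (v : Fin 4 → EZ) : ℤ :=
  if v 0 = ⊤ ∨ v 0 = finVal 2 ∨ v 0 = finVal 1 ∨ v 0 = finVal 0 then -1
  else if v 0 = finVal (-1) ∧ v 1 = ⊥ then -1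
  else 0

/- ### Auxiliary lemmas -/

lemma finVal_inj {a b : ℤ} : finVal a = finVal b ↔ a = b := by simp [finVal]
lemma finVal_ne_bot (a : ℤ) : finVal a ≠ ⊥ := by simp [finVal]
lemma finVal_ne_top (a : ℤ) : finVal a ≠ ⊤ := by simp [finVal]
lemma finVal_lt {a b : ℤ} : finVal a < finVal b ↔ a < b := by simp [finVal]
lemma finVal_lt_top (a : ℤ) : finVal a < ⊤ := by
  have h : ((⊤ : WithTop ℤ) : EZ) = (⊤ : EZ) := rfl
  rw [finVal, ← h, WithBot.coe_lt_coe]; exact WithTop.coe_lt_top a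
lemma top_cases (x : EZ) : x = ⊥ ∨ x = ⊤ ∨ ∃ t, x = finVal t := by
  induction x using WithBot.recBotCoe with
  | bot => left; rfl
  | coe y =>
    induction y using WithTop.recTopCoe with
    | top => right; left; rfl
    | coe t => right; right; exact ⟨t, rfl⟩
lemma map_finVal (m t : ℤ) :
    WithBot.map (WithTop.map (fun k => k - m)) (finVal t) = finVal (t - m) := by simp [finVal]

lemma beta_bot (m : ℤ) : beta 2 m ⊥ = ⊥ := by simp [beta, finVal]
lemma beta_top (m : ℤ) : beta 2 m ⊤ = ⊤ := by simp [beta, finVal_lt_top]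
lemma beta_fin (m t : ℤ) :
    beta 2 m (finVal t) = if m + 2 < t then ⊤ else if t < m - 2 then ⊥ else finVal (t - m) := by
  have h2 : ((2:ℕ):ℤ) = 2 := rfl
  simp only [beta, h2, finVal_lt, map_finVal]
lemma valZ_finVal (m : ℤ) : valZ (finVal m) = m := rfl
lemma refH_finVal (m : ℤ) : refH (finVal m) = m := by
  simp [refH, finVal_ne_bot, finVal_ne_top, valZ_finVal]

lemma globalF_fin {c : Config} {i m : ℤ} (h : c i = finVal m) :
    globalF 2 lamY c i = finVal (m + lamY (nbhd 2 c i)) := by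
  simp [globalF, h, finVal_ne_bot, finVal_ne_top, valZ_finVal]
lemma globalF_bot {c : Config} {i : ℤ} (h : c i = ⊥) : globalF 2 lamY c i = ⊥ := by
  simp [globalF, h]
lemma globalF_top {c : Config} {i : ℤ} (h : c i = ⊤) : globalF 2 lamY c i = ⊤ := by
  simp [globalF, h]
lemma lam_vals (v : Fin 4 → EZ) : lamY v = -1 ∨ lamY v = 0 := by
  unfold lamY; split_ifs <;> simp
lemma nbhd0 (c : Config) (i : ℤ) :
    nbhd 2 c i 0 = beta 2 (refH (c i)) (c (i - 2)) := by
  show beta 2 (refH (c i)) _ = _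
  norm_num
  rw [show i + (-2:ℤ) = i - 2 by ring]

lemma exists_fin {c c' : Config} (h : ∀ j, globalF 2 lamY c j = globalF 2 lamY c' j)
    {j u : ℤ} (hc : c j = finVal u) :
    ∃ u', c' j = finVal u' ∧ u - 1 ≤ u' ∧ u' ≤ u + 1 := by
  have e := h j
  rw [globalF_fin hc] at e
  rcases top_cases (c' j) with hb | ht | ⟨u', hu'⟩
  · rw [globalF_bot hb] at e; exact absurd e (finVal_ne_bot _)
  · rw [globalF_top ht] at e; exact absurd e (finVal_ne_top _)
  · rw [globalF_fin hu'] at e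
    have he := finVal_inj.mp e
    refine ⟨u', hu', ?_, ?_⟩ <;>
    · rcases lam_vals (nbhd 2 c j) with h1 | h1 <;>
        rcases lam_vals (nbhd 2 c' j) with h2 | h2 <;> omega

/-- The key local step: if two configurations with the same image differ by one
at position `i`, then they differ by one at `i-2` as well, with the larger one
strictly decreasing. -/
lemma step {c c' : Config} (h : ∀ j, globalF 2 lamY c j = globalF 2 lamY c' j)
    {i m : ℤ} (hc : c i = finVal m) (hc' : c' i = finVal (m - 1)) :
    c (i - 2) = finVal (m - 1) ∧ c' (i - 2) = finVal (m - 2) := by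
  have e := h i
  rw [globalF_fin hc, globalF_fin hc'] at e
  have he := finVal_inj.mp e
  have ha : lamY (nbhd 2 c i) = -1 ∧ lamY (nbhd 2 c' i) = 0 := by
    rcases lam_vals (nbhd 2 c i) with h1 | h1 <;>
      rcases lam_vals (nbhd 2 c' i) with h2 | h2 <;> exact ⟨by omega, by omega⟩
  -- from `lamY = 0` on `c'`: the first condition fails
  have hA' : ¬ (nbhd 2 c' i 0 = ⊤ ∨ nbhd 2 c' i 0 = finVal 2 ∨
      nbhd 2 c' i 0 = finVal 1 ∨ nbhd 2 c' i 0 = finVal 0) := by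
    intro hcon
    have h0 : lamY (nbhd 2 c' i) = -1 := by unfold lamY; rw [if_pos hcon]
    have := ha.2; omega
  rw [nbhd0, hc', refH_finVal] at hA'
  -- hence `c' (i-2)` is `⊥` or a finite value `≤ m - 2`
  have hC' : c' (i - 2) = ⊥ ∨ ∃ u', c' (i - 2) = finVal u' ∧ u' ≤ m - 2 := by
    rcases top_cases (c' (i - 2)) with hb | ht | ⟨u', hu'⟩
    · exact Or.inl hb
    · exact absurd (Or.inl (by rw [ht, beta_top])) hA'
    · right; refine ⟨u', hu', ?_⟩
      rw [hu', beta_fin] at hA'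
      push_neg at hA'
      split_ifs at hA' with h1 h2
      · exact absurd rfl hA'.1
      · omega
      · obtain ⟨-, n2, n1, n0⟩ := hA'
        have e2 : u' - (m - 1) ≠ 2 := fun hh => n2 (by rw [hh])
        have e1 : u' - (m - 1) ≠ 1 := fun hh => n1 (by rw [hh])
        have e0 : u' - (m - 1) ≠ 0 := fun hh => n0 (by rw [hh])
        omega
  -- the fact that `c' (i-2)` cannot be `⊥` once `c (i-2)` is finite
  have noBot : ∀ t : ℤ, c (i - 2) = finVal t → c' (i - 2) ≠ ⊥ := by
    intro t htv hb'
    have e2 := h (i - 2)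
    rw [globalF_fin htv, globalF_bot hb'] at e2
    exact finVal_ne_bot _ e2
  -- from `lamY = -1` on `c`
  have hA := ha.1
  unfold lamY at hA
  split_ifs at hA with h1 h2
  · -- case A: `c (i-2) ≥ m`, contradiction
    exfalso
    rw [nbhd0, hc, refH_finVal] at h1
    rcases top_cases (c (i - 2)) with hb | ht | ⟨t, htv⟩
    · rw [hb, beta_bot] at h1
      rcases h1 with h' | h' | h' | h'
      · simp at h'
      exacts [finVal_ne_bot _ h'.symm, finVal_ne_bot _ h'.symm, finVal_ne_bot _ h'.symm]
    · have e2 := h (i - 2)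
      rw [globalF_top ht] at e2
      rcases hC' with hb' | ⟨u', hu', -⟩
      · rw [globalF_bot hb'] at e2; simp at e2
      · rw [globalF_fin hu'] at e2; exact finVal_ne_top _ e2.symm
    · have hge : m ≤ t := by
        rw [htv, beta_fin] at h1
        split_ifs at h1 with g1 g2
        · omega
        · rcases h1 with h' | h' | h' | h'
          · simp at h'
          exacts [(finVal_ne_bot _ h'.symm).elim, (finVal_ne_bot _ h'.symm).elim,
            (finVal_ne_bot _ h'.symm).elim]
        · rcases h1 with h' | h' | h' | h'
          · exact absurd h' (finVal_ne_top _)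
          all_goals (have := finVal_inj.mp h'; omega)
      rcases hC' with hb' | ⟨u', hu', hle⟩
      · exact noBot t htv hb'
      · obtain ⟨u'', hu'', hl, hr⟩ := exists_fin h htv
        rw [hu'] at hu''
        have := finVal_inj.mp hu''
        omega
  · -- case B: `c (i-2) = m - 1`
    have hv0 := h2.1
    rw [nbhd0, hc, refH_finVal] at hv0
    have hcm : c (i - 2) = finVal (m - 1) := by
      rcases top_cases (c (i - 2)) with hb | ht | ⟨t, htv⟩
      · rw [hb, beta_bot] at hv0; exact absurd hv0.symm (finVal_ne_bot _)
      · rw [ht, beta_top] at hv0; exact absurd hv0.symm (finVal_ne_top _)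
      · rw [htv, beta_fin] at hv0
        split_ifs at hv0 with g1 g2
        · exact absurd hv0.symm (finVal_ne_top _)
        · exact absurd hv0.symm (finVal_ne_bot _)
        · have := finVal_inj.mp hv0
          rw [htv]; exact finVal_inj.mpr (by omega)
    refine ⟨hcm, ?_⟩
    rcases hC' with hb' | ⟨u', hu', hle⟩
    · exact absurd hb' (noBot _ hcm)
    · obtain ⟨u'', hu'', hl, hr⟩ := exists_fin h hcm
      rw [hu'] at hu''
      have := finVal_inj.mp hu''
      rw [hu']; exact finVal_inj.mpr (by omega)

lemma iter {c c' : Config} (h : ∀ j, globalF 2 lamY c j = globalF 2 lamY c' j)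
    {i m : ℤ} (hc : c i = finVal m) (hc' : c' i = finVal (m - 1)) :
    ∀ k : ℕ, c (i - 2 * (k : ℤ)) = finVal (m - k) ∧
      c' (i - 2 * (k : ℤ)) = finVal (m - 1 - k) := by
  intro k
  induction k with
  | zero => simpa using ⟨hc, hc'⟩
  | succ k ih =>
    obtain ⟨h1, h2⟩ := ih
    have h2' : c' (i - 2 * (k : ℤ)) = finVal ((m - k) - 1) := by
      rw [h2]; exact finVal_inj.mpr (by ring)
    obtain ⟨g1, g2⟩ := step h h1 h2'
    have harg : i - 2 * ((k + 1 : ℕ) : ℤ) = i - 2 * (k : ℤ) - 2 := by push_cast; ring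
    constructor
    · rw [harg, g1]; exact finVal_inj.mpr (by push_cast; ring)
    · rw [harg, g2]; exact finVal_inj.mpr (by push_cast; ring)

lemma fin_contra {c c' : Config} (h : ∀ j, globalF 2 lamY c j = globalF 2 lamY c' j)
    (hF : FiniteConf c) {i m : ℤ} (hc : c i = finVal m) (hc' : c' i = finVal (m - 1)) :
    False := by
  obtain ⟨K, hK⟩ := hF
  have it := iter h hc hc'
  have key : ∀ k : ℕ, K + i.natAbs ≤ k → m = k := by
    intro k hk
    have h1 := (it k).1
    have h0 : c (i - 2 * (k : ℤ)) = finVal 0 := by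
      apply hK
      rw [Int.abs_eq_natAbs]
      omega
    have := finVal_inj.mp (h1.symm.trans h0)
    omega
  have k1 := key (K + i.natAbs) le_rfl
  have k2 := key (K + i.natAbs + 1) (by omega)
  omega

lemma per_contra {c c' : Config} (h : ∀ j, globalF 2 lamY c j = globalF 2 lamY c' j)
    (hP : PeriodicConf c) {i m : ℤ} (hc : c i = finVal m) (hc' : c' i = finVal (m - 1)) :
    False := by
  obtain ⟨p, hp0, hp⟩ := hP
  set q := p.natAbs with hq
  have hq1 : 1 ≤ q := by
    have : p.natAbs ≠ 0 := fun hh => hp0 (by omega)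
    omega
  have hstep : ∀ j : ℤ, c (j - (q : ℤ)) = c j := by
    intro j
    rcases le_or_gt 0 p with hpos | hneg
    · have hcast : (q : ℤ) = p := by rw [hq]; omega
      rw [hcast]
      have := hp (j - p)
      rw [sub_add_cancel] at this
      exact this.symm
    · have hcast : (q : ℤ) = -p := by rw [hq]; omega
      rw [hcast, sub_neg_eq_add, hp j]
  have hmul : ∀ (n : ℕ) (j : ℤ), c (j - (n : ℤ) * (q : ℤ)) = c j := by
    intro n
    induction n with
    | zero => intro j; norm_num
    | succ n ih =>
      intro j
      have harg : j - ((n + 1 : ℕ) : ℤ) * (q : ℤ) = (j - (q : ℤ)) - (n : ℤ) * (q : ℤ) := by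
        push_cast; ring
      rw [harg, ih, hstep]
  have it := (iter h hc hc' (q * q)).1
  have h2 := hmul (2 * q) i
  have harg : i - 2 * ((q * q : ℕ) : ℤ) = i - ((2 * q : ℕ) : ℤ) * (q : ℤ) := by push_cast; ring
  rw [harg, h2, hc] at it
  have hm := finVal_inj.mp it
  have : 1 ≤ q * q := Nat.one_le_iff_ne_zero.mpr (by positivity)
  omega

lemma injOn_of_contra (S : Set Config)
    (contra : ∀ {c c' : Config}, (∀ j, globalF 2 lamY c j = globalF 2 lamY c' j) →
      c ∈ S → ∀ (i m : ℤ), c i = finVal m → c' i = finVal (m - 1) → False) :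
    Set.InjOn (globalF 2 lamY) S := by
  intro c hcS c' hcS' h
  by_contra hne
  have hex : ∃ i, c i ≠ c' i := by
    by_contra hall
    push_neg at hall
    exact hne (funext hall)
  obtain ⟨i, hi⟩ := hex
  have hj : ∀ j, globalF 2 lamY c j = globalF 2 lamY c' j := fun j => congrFun h j
  rcases top_cases (c i) with hb | ht | ⟨m, hm⟩
  · have e := hj i
    rw [globalF_bot hb] at e
    rcases top_cases (c' i) with hb' | ht' | ⟨m', hm'⟩
    · exact hi (hb.trans hb'.symm)
    · rw [globalF_top ht'] at e; simp at e
    · rw [globalF_fin hm'] at e; exact finVal_ne_bot _ e.symm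
  · have e := hj i
    rw [globalF_top ht] at e
    rcases top_cases (c' i) with hb' | ht' | ⟨m', hm'⟩
    · rw [globalF_bot hb'] at e; simp at e
    · exact hi (ht.trans ht'.symm)
    · rw [globalF_fin hm'] at e; exact finVal_ne_top _ e.symm
  · obtain ⟨u', hu', hl, hr⟩ := exists_fin hj hm
    have hne' : m ≠ u' := fun hh => hi (by rw [hm, hu', hh])
    rcases (by omega : u' = m - 1 ∨ u' = m + 1) with hcase | hcase
    · exact absurd (contra hj hcS i m hm (by rw [hu', hcase])) not_false
    · exact absurd (contra (fun j => (hj j).symm) hcS' i u' hu'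
        (by rw [hm]; exact finVal_inj.mpr (by omega))) not_false

/-- `f_Y` is `F`-injective and `P`-injective: distinct finite configurations have
distinct images under `f_Y`, and distinct periodic configurations have distinct
images under `f_Y`. -/
theorem Y_F_and_P_injective :
    Set.InjOn (globalF 2 lamY) {c : Config | FiniteConf c} ∧
    Set.InjOn (globalF 2 lamY) {c : Config | PeriodicConf c} := by
  constructor
  · exact injOn_of_contra _ (fun h hS i m hc hc' => fin_contra h hS hc hc')
  · exact injOn_of_contra _ (fun h hS i m hc hc' => per_contra h hS hc hc')
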